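/- Let n > 1, m > 1 be integers such that every prime factor of n divides m. Then the chromatic number of the m-graph of ℤ/nℤ equals 2 when n ≥ 2 (and in particular the graph is bipartite). -/

import Mathlib

def mGraph (m : ℕ) (H : Type*) [AddCommGroup H] : SimpleGraph H where
  Adj a b := a ≠ b ∧ (m • a = b ∨ m • b = a)
  symm := ⟨fun _ _ h => ⟨h.1.symm, h.2.symm⟩⟩
  loopless := ⟨fun _ h => h.1 rfl⟩

instance (m : ℕ) (H : Type*) [AddCommGroup H] [DecidableEq H] :
    DecidableRel (mGraph m H).Adj :=
  fun a b => inferInstanceAs (Decidable (a ≠ b ∧ (m • a = b ∨ m • b = a)))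

lemma aux_dvd_pow (n m : ℕ) (hn : 0 < n) (hm : 1 < m)
    (hp : ∀ p : ℕ, p.Prime → p ∣ n → p ∣ m) : n ∣ m ^ n := by
  rw [Nat.dvd_iff_prime_pow_dvd_dvd]
  intro p k pp hpk
  rcases Nat.eq_zero_or_pos k with rfl | hk
  · simp
  have hpn : p ∣ n := dvd_trans (dvd_pow_self p hk.ne') hpk
  have hpm : p ∣ m := hp p pp hpn
  have hkn : k ≤ n := by
    have h1 : p ^ k ≤ n := Nat.le_of_dvd hn hpk
    have h2 : 2 ^ k ≤ p ^ k := Nat.pow_le_pow_left pp.two_le k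
    have h3 : k < 2 ^ k := Nat.lt_two_pow_self
    omega
  exact dvd_trans (pow_dvd_pow_of_dvd hpm k) (pow_dvd_pow m hkn)

theorem stmt_10 (n m : ℕ) (hn : 1 < n) (hm : 1 < m)
    (hp : ∀ p : ℕ, p.Prime → p ∣ n → p ∣ m) :
    (mGraph m (ZMod n)).chromaticNumber = 2 := by
  haveI : NeZero n := ⟨by omega⟩
  -- every element is killed by some power of m
  have hmn : ((m : ZMod n)) ^ n = 0 := by
    have : ((m ^ n : ℕ) : ZMod n) = 0 := by
      rw [ZMod.natCast_eq_zero_iff]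
      exact aux_dvd_pow n m (by omega) hm hp
    push_cast at this
    exact this
  have key : ∀ a : ZMod n, ∃ k : ℕ, (m : ZMod n) ^ k * a = 0 := fun a =>
    ⟨n, by rw [hmn, zero_mul]⟩
  classical
  set f : ZMod n → ℕ := fun a => Nat.find (key a) with hf
  have hf0 : ∀ a : ZMod n, (m : ZMod n) ^ (f a) * a = 0 := fun a => Nat.find_spec (key a)
  have hfmin : ∀ (a : ZMod n) (k : ℕ), (m : ZMod n) ^ k * a = 0 → f a ≤ k :=
    fun a k h => Nat.find_le h
  -- key step: along an edge, f decreases by exactly one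
  have step : ∀ a b : ZMod n, a ≠ b → m • a = b → f a = f b + 1 := by
    intro a b hab hmab
    rw [nsmul_eq_mul] at hmab
    have ha1 : 1 ≤ f a := by
      by_contra h
      have h0 : f a = 0 := by omega
      have ha0 : a = 0 := by simpa [h0] using hf0 a
      apply hab
      rw [ha0] at hmab ⊢
      rw [← hmab, mul_zero]
    have h1 : f b ≤ f a - 1 := by
      apply hfmin
      rw [← hmab, ← mul_assoc, ← pow_succ]
      have : f a - 1 + 1 = f a := by omega
      rw [this]; exact hf0 a
    have h2 : f a ≤ f b + 1 := by
      apply hfmin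
      have : (m : ZMod n) ^ (f b + 1) * a = (m : ZMod n) ^ (f b) * ((m : ZMod n) * a) := by
        ring
      rw [this, hmab]
      exact hf0 b
    omega
  -- the 2-coloring
  have C : (mGraph m (ZMod n)).Coloring (ZMod 2) := by
    refine SimpleGraph.Coloring.mk (fun a => (f a : ZMod 2)) ?_
    intro a b hab
    rcases hab.2 with h | h
    · rw [step a b hab.1 h]
      push_cast
      intro hc
      exact one_ne_zero (add_eq_left.mp hc)
    · rw [step b a (Ne.symm hab.1) h]
      push_cast
      intro hc
      exact one_ne_zero (add_eq_left.mp hc.symm)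
  -- the edge between 1 and m
  have hne : (1 : ZMod n) ≠ (m : ZMod n) := by
    intro h
    have : (1 : ℕ) ≡ m [MOD n] := by
      rwa [← ZMod.natCast_eq_natCast_iff, Nat.cast_one]
    have hdvd : n ∣ m - 1 := (Nat.modEq_iff_dvd' (by omega)).mp this
    obtain ⟨p, pp, hpn⟩ := Nat.exists_prime_and_dvd (by omega : n ≠ 1)
    have h1 : p ∣ m - 1 := hpn.trans hdvd
    have h2 : p ∣ m := hp p pp hpn
    have h3 : p ∣ 1 := by
      have := Nat.dvd_sub h2 h1
      simpa [Nat.sub_sub_self (by omega : 1 ≤ m)] using this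
    exact pp.ne_one (Nat.dvd_one.mp h3)
  have hadj : (mGraph m (ZMod n)).Adj 1 (m : ZMod n) := by
    show (1 : ZMod n) ≠ m ∧ (m • (1 : ZMod n) = m ∨ m • (m : ZMod n) = 1)
    refine ⟨hne, Or.inl ?_⟩
    rw [nsmul_eq_mul, mul_one]
  apply le_antisymm
  · have h2 : Fintype.card (ZMod 2) = 2 := by simp
    have := C.colorable
    rw [h2] at this
    exact_mod_cast this.chromaticNumber_le
  · by_contra h
    push_neg at h
    have h1 : (mGraph m (ZMod n)).chromaticNumber ≤ (1 : ℕ) := by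
      exact_mod_cast Order.le_of_lt_add_one (by simpa only [one_add_one_eq_two] using h)
    obtain ⟨c⟩ := SimpleGraph.chromaticNumber_le_iff_colorable.mp h1
    exact (c.valid hadj) (Subsingleton.elim _ _)
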